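/- arXiv:2103.11280 — 2 statements merged into one kernel-verified Lean document; each statement's English description precedes it below -/
import Mathlib

section
/- Let A be an i×i lower triangular real matrix with positive diagonal entries, a_{ii} its last diagonal entry, B := (A⁻¹)ᵀ, and let 1_{i} denote the i-th standard basis vector and b the i-th column of B. Then the inverse of a_{ii}² · 1_i 1_iᵀ + A Aᵀ equals B Bᵀ - (1/2) b bᵀ. -/
open Matrix

lemma mul_vmv {n : Type*} [Fintype n] (M : Matrix n n ℝ) (w v : n → ℝ) :
    M * vecMulVec w v = vecMulVec (M *ᵥ w) v := by
  ext i j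
  simp [mul_apply, vecMulVec_apply, mulVec, dotProduct, Finset.sum_mul, mul_assoc]

lemma vmv_mul {n : Type*} [Fintype n] (M : Matrix n n ℝ) (w v : n → ℝ) :
    vecMulVec w v * M = vecMulVec w (v ᵥ* M) := by
  ext i j
  simp [mul_apply, vecMulVec_apply, vecMul, dotProduct, Finset.mul_sum, mul_assoc]

lemma vmv_smul_left {n : Type*} (c : ℝ) (w v : n → ℝ) :
    vecMulVec (c • w) v = c • vecMulVec w v := by
  ext i j; simp [vecMulVec_apply, mul_assoc]

theorem lemma_3_1 (i : ℕ) (A : Matrix (Fin (i + 1)) (Fin (i + 1)) ℝ)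
    (hlow : ∀ k l : Fin (i + 1), k < l → A k l = 0)
    (hdiag : ∀ k : Fin (i + 1), 0 < A k k)
    (B : Matrix (Fin (i + 1)) (Fin (i + 1)) ℝ) (hB : B = A⁻¹ᵀ)
    (e : Fin (i + 1) → ℝ) (he : e = Pi.single (Fin.last i) 1)
    (b : Fin (i + 1) → ℝ) (hb : b = fun k => B k (Fin.last i)) :
    ((A (Fin.last i) (Fin.last i)) ^ 2 • vecMulVec e e + A * Aᵀ)⁻¹ =
      B * Bᵀ - (1 / 2 : ℝ) • vecMulVec b b := by
  set a := A (Fin.last i) (Fin.last i) with ha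
  have ha0 : a ≠ 0 := (hdiag _).ne'
  have hdet : IsUnit A.det := by
    rw [Matrix.det_of_lowerTriangular A (fun k l h => hlow k l h)]
    exact (Finset.prod_pos (fun k _ => hdiag k)).ne'.isUnit
  have h1 : A⁻¹ * A = 1 := Matrix.nonsing_inv_mul A hdet
  have h2 : A * A⁻¹ = 1 := Matrix.mul_nonsing_inv A hdet
  have hBt : Bᵀ = A⁻¹ := by rw [hB, transpose_transpose]
  -- A *ᵥ e = a • e
  have hAe : A *ᵥ e = a • e := by
    funext k
    rcases eq_or_ne k (Fin.last i) with rfl | hk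
    · simp [he, mulVec, dotProduct, Pi.single_apply, ha]
    · have hk' : k < Fin.last i := lt_of_le_of_ne (Fin.le_last k) hk
      simp [he, mulVec, dotProduct, Pi.single_apply, hlow k _ hk', hk]
  -- A⁻¹ *ᵥ e = (1/a) • e
  have hAinv_e : A⁻¹ *ᵥ e = (1 / a) • e := by
    have h3 : A *ᵥ ((1 / a) • e) = e := by
      rw [mulVec_smul, hAe, smul_smul, one_div, inv_mul_cancel₀ ha0, one_smul]
    calc A⁻¹ *ᵥ e = A⁻¹ *ᵥ (A *ᵥ ((1 / a) • e)) := by rw [h3]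
      _ = (A⁻¹ * A) *ᵥ ((1 / a) • e) := by rw [mulVec_mulVec]
      _ = (1 / a) • e := by rw [h1, one_mulVec]
  -- b as row of A⁻¹
  have hbv : b = e ᵥ* A⁻¹ := by
    funext k
    simp [hb, hB, he, vecMul, dotProduct, Pi.single_apply]
  have hbA : b ᵥ* A = e := by
    rw [hbv, vecMul_vecMul, h1, vecMul_one]
  -- B *ᵥ e = b
  have hBe : B *ᵥ e = b := by
    funext k
    simp [hb, he, mulVec, dotProduct, Pi.single_apply]
  -- b ⬝ᵥ ... : e ᵥ* Aᵀ = a • e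
  have heAt : e ᵥ* Aᵀ = a • e := by
    rw [vecMul_transpose, hAe]
  -- b dotted with e
  have hbe : b ⬝ᵥ e = 1 / a := by
    have h4 := congrFun hAinv_e (Fin.last i)
    simp [he, mulVec, dotProduct, Pi.single_apply] at h4
    rw [one_div]
    simpa [hb, hB, he, dotProduct, Pi.single_apply] using h4
  apply Matrix.inv_eq_left_inv
  have key1 : (B * Bᵀ) * (A * Aᵀ) = 1 := by
    rw [hBt, hB, Matrix.mul_assoc, ← Matrix.mul_assoc A⁻¹ A Aᵀ, h1, Matrix.one_mul,
      ← transpose_mul, h2, transpose_one]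
  have key2 : (B * Bᵀ) * vecMulVec e e = (1 / a) • vecMulVec b e := by
    rw [mul_vmv, ← mulVec_mulVec, hBt, hAinv_e, mulVec_smul, hBe, vmv_smul_left]
  have key3 : vecMulVec b b * (A * Aᵀ) = a • vecMulVec b e := by
    rw [vmv_mul, ← vecMul_vecMul, hbA, heAt]
    ext k l; simp [vecMulVec_apply, mul_comm, mul_assoc, mul_left_comm]
  have key4 : vecMulVec b b * vecMulVec e e = (1 / a) • vecMulVec b e := by
    rw [vmv_mul]
    have : b ᵥ* vecMulVec e e = (1 / a) • e := by
      funext k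
      simp [vecMul, vecMulVec_apply, dotProduct, Finset.sum_mul]
      rw [show (∑ x, b x * (e x * e k)) = (b ⬝ᵥ e) * e k by
        simp [dotProduct, Finset.sum_mul, mul_assoc], hbe]
      ring
    rw [this]
    ext k l; simp [vecMulVec_apply, mul_comm, mul_assoc, mul_left_comm]
  rw [mul_add, sub_mul, sub_mul, mul_smul_comm, mul_smul_comm, smul_mul_assoc, smul_mul_assoc,
    key1, key2, key3, key4]
  simp only [smul_smul]
  rw [show a ^ 2 * (1 / a) = a from by field_simp,
    show a ^ 2 * ((1 / 2) * (1 / a)) = a / 2 from by field_simp,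
    show (1 / 2 : ℝ) * a = a / 2 from by ring]
  module
end

section
/- Let r₁,…,r_K be positive reals summing to 1 and c₂,…,c_K positive reals. The matrix diag(r₂/c₂²,…,r_K/c_K²) - α αᵀ, where α_k = r_k/c_k, is positive definite. -/
open Matrix

theorem info_posDef (K : ℕ) (hK : 2 ≤ K)
    (r₁ : ℝ) (hr₁ : 0 < r₁) (r : Fin (K - 1) → ℝ) (hr : ∀ k, 0 < r k)
    (hsum : r₁ + ∑ k, r k = 1)
    (c : Fin (K - 1) → ℝ) (hc : ∀ k, 0 < c k)
    (α : Fin (K - 1) → ℝ) (hα : α = fun k => r k / c k) :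
    (Matrix.diagonal (fun k => r k / (c k) ^ 2) - vecMulVec α α).PosDef := by
  subst hα
  rw [Matrix.posDef_iff_dotProduct_mulVec]
  constructor
  · refine Matrix.IsHermitian.sub (Matrix.isHermitian_diagonal _) ?_
    ext i j
    simp [vecMulVec, mul_comm]
  · intro x hx
    have key : (star x ⬝ᵥ (Matrix.diagonal (fun k => r k / (c k) ^ 2)
        - vecMulVec (fun k => r k / c k) (fun k => r k / c k)) *ᵥ x)
        = (∑ k, r k * (x k / c k) ^ 2) - (∑ k, r k * (x k / c k)) ^ 2 := by
      rw [Matrix.sub_mulVec, star_trivial, dotProduct_sub]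
      congr 1
      · simp only [dotProduct, Matrix.mulVec_diagonal]
        refine Finset.sum_congr rfl fun k _ => ?_
        field_simp
      · simp only [dotProduct, Matrix.mulVec, vecMulVec_apply]
        rw [sq, Finset.sum_mul_sum]
        refine Finset.sum_congr rfl fun i _ => ?_
        rw [Finset.mul_sum]
        refine Finset.sum_congr rfl fun j _ => ?_
        ring
    rw [key]
    set y : Fin (K - 1) → ℝ := fun k => x k / c k with hy
    obtain ⟨i, hi⟩ : ∃ i, x i ≠ 0 := Function.ne_iff.mp hx
    have hyi : y i ≠ 0 := div_ne_zero hi (hc i).ne'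
    have hS : 0 < ∑ k, r k * y k ^ 2 := by
      refine Finset.sum_pos' (fun k _ => mul_nonneg (hr k).le (sq_nonneg _)) ⟨i, Finset.mem_univ i, ?_⟩
      exact mul_pos (hr i) (by positivity)
    have hCS : (∑ k, r k * y k) ^ 2 ≤ (∑ k, r k) * ∑ k, r k * y k ^ 2 := by
      have := Finset.sum_mul_sq_le_sq_mul_sq Finset.univ
        (fun k => Real.sqrt (r k)) (fun k => Real.sqrt (r k) * y k)
      calc (∑ k, r k * y k) ^ 2
          = (∑ k, Real.sqrt (r k) * (Real.sqrt (r k) * y k)) ^ 2 := by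
            congr 1; refine Finset.sum_congr rfl fun k _ => ?_
            rw [← mul_assoc, Real.mul_self_sqrt (hr k).le]
        _ ≤ (∑ k, Real.sqrt (r k) ^ 2) * ∑ k, (Real.sqrt (r k) * y k) ^ 2 := this
        _ = (∑ k, r k) * ∑ k, r k * y k ^ 2 := by
            congr 1
            · exact Finset.sum_congr rfl fun k _ => Real.sq_sqrt (hr k).le
            · refine Finset.sum_congr rfl fun k _ => ?_
              rw [mul_pow, Real.sq_sqrt (hr k).le]
    have hrsum : (∑ k, r k) < 1 := by linarith
    have : (∑ k, r k) * ∑ k, r k * y k ^ 2 < ∑ k, r k * y k ^ 2 := by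
      nlinarith
    simpa using sub_pos.mpr (lt_of_le_of_lt hCS this)
end
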